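/- Let t_m > 0, let A : ℝ → Matrix (n × n) ℝ and δ : ℝ → ℝⁿ be continuous on [0, t_m], and let Δx : ℝ → ℝⁿ be differentiable on [0, t_m] with Δx(0) = 0 and Δx'(t) = A(t)·Δx(t) − δ(t) for t ∈ [0, t_m]. Let A₀ = A(0), and suppose there are an invertible n×n real matrix P and a diagonal n×n real matrix Σ with diagonal entries λ₁ ≥ λ₂ ≥ … ≥ λₙ such that A₀ = P·Σ·P⁻¹. Let h_max ≥ 0 satisfy |(P⁻¹·(A(t) − A₀)·P)_{ij}| ≤ h_max for all t ∈ [0, t_m] and all i, j, and let δ_max ≥ 0 satisfy |(P⁻¹·δ(t))_i| ≤ δ_max for all t ∈ [0, t_m] and all i. Assume λ₁ + n·h_max ≠ 0. Then for all t ∈ [0, t_m], ‖Δx(t)‖_∞ ≤ ‖P‖_∞ · (δ_max / (λ₁ + n·h_max)) · (e^{(λ₁ + n·h_max)·t} − 1), where ‖Δx(t)‖_∞ = max_i |Δx(t)_i| and ‖P‖_∞ is the operator norm of P induced by the ∞-norm on ℝⁿ (the maximum absolute row sum of P). -/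

import Mathlib

open Matrix

open Set intervalIntegral in
lemma gronwall_aux (t_m L c dm : ℝ) (hc : 0 ≤ c) (hdm : 0 ≤ dm)
    (hK : L + c ≠ 0) (m : ℝ → ℝ) (hm : Continuous m) (hm0 : ∀ s, 0 ≤ m s)
    (key : ∀ t ∈ Set.Icc 0 t_m,
      m t ≤ Real.exp (L * t) * ∫ s in (0:ℝ)..t, Real.exp (-L * s) * (c * m s + dm)) :
    ∀ t ∈ Set.Icc 0 t_m, m t ≤ dm / (L + c) * (Real.exp ((L + c) * t) - 1) := by
  intro t ht
  set ψ : ℝ → ℝ := fun s => Real.exp (-L * s) * (c * m s + dm) with hψ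
  have hψcont : Continuous ψ :=
    ((Real.continuous_exp.comp (continuous_const.mul continuous_id)).mul
      ((continuous_const.mul hm).add continuous_const))
  set F : ℝ → ℝ := fun u => ∫ s in (0:ℝ)..u, ψ s with hF
  have hFd : ∀ u : ℝ, HasDerivAt F (ψ u) u := fun u =>
    (hψcont.integral_hasStrictDerivAt 0 u).hasDerivAt
  have hFcont : Continuous F := continuous_iff_continuousAt.2 fun u => (hFd u).continuousAt
  set H : ℝ → ℝ := fun u => Real.exp (-c * u) * F u -
      dm * (1 - Real.exp (-(L + c) * u)) / (L + c) with hH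
  have hHd : ∀ u : ℝ, HasDerivAt H
      (Real.exp (-c * u) * ψ u + (-c * Real.exp (-c * u)) * F u
        - dm * Real.exp (-(L + c) * u)) u := by
    intro u
    have h1 : HasDerivAt (fun s : ℝ => Real.exp (-c * s)) (-c * Real.exp (-c * u)) u := by
      simpa [mul_comm] using ((hasDerivAt_id u).const_mul (-c)).exp
    have h2 : HasDerivAt (fun s : ℝ => Real.exp (-(L + c) * s))
        (-(L + c) * Real.exp (-(L + c) * u)) u := by
      simpa [mul_comm] using ((hasDerivAt_id u).const_mul (-(L + c))).exp
    have h3 : HasDerivAt (fun s : ℝ => dm * (1 - Real.exp (-(L + c) * s)) / (L + c))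
        (dm * Real.exp (-(L + c) * u)) u := by
      have := (((hasDerivAt_const u (1:ℝ)).sub h2).const_mul dm).div_const (L + c)
      refine this.congr_deriv ?_
      rw [div_eq_iff hK]
      ring
    have := (h1.mul (hFd u)).sub h3
    refine this.congr_deriv ?_
    ring
  have hmF : ∀ u ∈ Set.Icc (0:ℝ) t_m, m u ≤ Real.exp (L * u) * F u := key
  have hderiv_le : ∀ u ∈ interior (Set.Icc (0:ℝ) t_m), deriv H u ≤ 0 := by
    intro u hu
    rw [interior_Icc] at hu
    rw [(hHd u).deriv]
    have hmu := hmF u (Ioo_subset_Icc_self hu)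
    have hee : Real.exp (-L * u) * Real.exp (L * u) = 1 := by rw [← Real.exp_add]; simp
    have hee2 : Real.exp (-c * u) * Real.exp (-L * u) = Real.exp (-(L + c) * u) := by
      rw [← Real.exp_add]; ring_nf
    have h5 : c * m u + dm ≤ c * (Real.exp (L * u) * F u) + dm := by nlinarith
    have h4 : Real.exp (-c * u) * ψ u ≤ c * Real.exp (-c * u) * F u
        + dm * Real.exp (-(L + c) * u) := by
      calc Real.exp (-c * u) * ψ u
          = (Real.exp (-c * u) * Real.exp (-L * u)) * (c * m u + dm) := by rw [hψ]; ring
        _ ≤ (Real.exp (-c * u) * Real.exp (-L * u)) * (c * (Real.exp (L * u) * F u) + dm) :=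
            mul_le_mul_of_nonneg_left h5 (by positivity)
        _ = c * Real.exp (-c * u) * (Real.exp (-L * u) * Real.exp (L * u)) * F u
            + dm * (Real.exp (-c * u) * Real.exp (-L * u)) := by ring
        _ = c * Real.exp (-c * u) * F u + dm * Real.exp (-(L + c) * u) := by
            rw [hee, hee2]; ring
    linarith
  have hanti : AntitoneOn H (Set.Icc 0 t_m) := by
    apply antitoneOn_of_deriv_nonpos (convex_Icc _ _)
    · exact Continuous.continuousOn (by
        exact ((Real.continuous_exp.comp (continuous_const.mul continuous_id)).mul hFcont).sub
          (((continuous_const.mul ((continuous_const.sub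
            (Real.continuous_exp.comp (continuous_const.mul continuous_id))))).div_const _)))
    · exact fun u hu => (hHd u).differentiableAt.differentiableWithinAt
    · exact hderiv_le
  have h0mem : (0:ℝ) ∈ Set.Icc (0:ℝ) t_m := ⟨le_rfl, le_trans ht.1 ht.2⟩
  have hH0 : H 0 = 0 := by simp [hH, hF]
  have hHt : H t ≤ 0 := by
    have := hanti h0mem ht ht.1
    rwa [hH0] at this
  have h6 : Real.exp (-c * t) * F t ≤ dm * (1 - Real.exp (-(L + c) * t)) / (L + c) := by
    rw [hH] at hHt; dsimp only at hHt; linarith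
  have h7 := mul_le_mul_of_nonneg_left h6 (Real.exp_nonneg ((L + c) * t))
  have e1 : Real.exp ((L + c) * t) * (Real.exp (-c * t) * F t) = Real.exp (L * t) * F t := by
    rw [← mul_assoc, ← Real.exp_add]; ring_nf
  have hee3 : Real.exp ((L + c) * t) * Real.exp (-(L + c) * t) = 1 := by
    rw [← Real.exp_add, show (L + c) * t + -(L + c) * t = 0 by ring, Real.exp_zero]
  have e2 : Real.exp ((L + c) * t) * (dm * (1 - Real.exp (-(L + c) * t)) / (L + c))
      = dm / (L + c) * (Real.exp ((L + c) * t) - 1) := by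
    calc Real.exp ((L + c) * t) * (dm * (1 - Real.exp (-(L + c) * t)) / (L + c))
        = dm / (L + c) * (Real.exp ((L + c) * t)
            - Real.exp ((L + c) * t) * Real.exp (-(L + c) * t)) := by ring
      _ = dm / (L + c) * (Real.exp ((L + c) * t) - 1) := by rw [hee3]
  rw [e1, e2] at h7
  exact le_trans (key t ht) h7

/-- **Main theorem (Theorem 3.3): global forward-error bound.**
Let `Δx' t = A t *ᵥ Δx t - δ t` on `[0, t_m]` with `Δx 0 = 0`, where `A` and `δ`
are continuous on `[0, t_m]`.  Let `A₀ = A 0 = P * Σ * P⁻¹` with `P` invertible and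
`Σ` diagonal with diagonal entries `λ 0 ≥ λ 1 ≥ … ≥ λ (n-1)`.  If
`|(P⁻¹ * (A t - A₀) * P) i j| ≤ h_max` and `|(P⁻¹ *ᵥ δ t) i| ≤ δ_max` on `[0, t_m]`,
and `λ 0 + n * h_max ≠ 0`, then for all `t ∈ [0, t_m]`,
`‖Δx t‖_∞ ≤ ‖P‖_∞ * (δ_max / (λ 0 + n * h_max)) * (exp ((λ 0 + n * h_max) * t) - 1)`,
where `‖Δx t‖_∞ = max_i |Δx t i|` (the Pi sup norm) and `‖P‖_∞` is the maximum
absolute row sum of `P`. -/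
theorem global_error_bound (n : ℕ) (hn : 0 < n) (t_m : ℝ) (ht_m : 0 < t_m)
    (A : ℝ → Matrix (Fin n) (Fin n) ℝ) (δ : ℝ → Fin n → ℝ)
    (hA : ContinuousOn A (Set.Icc 0 t_m))
    (hδcont : ContinuousOn δ (Set.Icc 0 t_m))
    (Δx : ℝ → Fin n → ℝ)
    (hΔx0 : Δx 0 = 0)
    (hΔx : ∀ t ∈ Set.Icc 0 t_m,
      HasDerivWithinAt Δx (A t *ᵥ Δx t - δ t) (Set.Icc 0 t_m) t)
    (A₀ P : Matrix (Fin n) (Fin n) ℝ) (hA₀ : A₀ = A 0)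
    (hP : IsUnit P.det)
    (lam : Fin n → ℝ) (hlam : Antitone lam)
    (hdiag : A₀ = P * Matrix.diagonal lam * P⁻¹)
    (h_max δ_max : ℝ) (hh : 0 ≤ h_max) (hd : 0 ≤ δ_max)
    (hB : ∀ t ∈ Set.Icc 0 t_m, ∀ i j, |(P⁻¹ * (A t - A₀) * P) i j| ≤ h_max)
    (hg : ∀ t ∈ Set.Icc 0 t_m, ∀ i, |(P⁻¹ *ᵥ δ t) i| ≤ δ_max)
    (hne : lam ⟨0, hn⟩ + n * h_max ≠ 0) :
    ∀ t ∈ Set.Icc 0 t_m,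
      ‖Δx t‖ ≤
        (⨆ i : Fin n, ∑ j : Fin n, |P i j|) *
          (δ_max / (lam ⟨0, hn⟩ + n * h_max)) *
            (Real.exp ((lam ⟨0, hn⟩ + n * h_max) * t) - 1) := by
  have hPP : P⁻¹ * P = 1 := Matrix.nonsing_inv_mul P hP
  have hPP' : P * P⁻¹ = 1 := Matrix.mul_nonsing_inv P hP
  set L : ℝ := lam ⟨0, hn⟩ with hLdef
  set c : ℝ := (n : ℝ) * h_max with hcdef
  have hc : 0 ≤ c := mul_nonneg (Nat.cast_nonneg n) hh
  -- diagonalization fact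
  have h1 : P⁻¹ * A₀ * P = Matrix.diagonal lam := by
    rw [hdiag]
    simp only [Matrix.mul_assoc, hPP, Matrix.mul_one]
    rw [← Matrix.mul_assoc, hPP, Matrix.one_mul]
  -- clipping
  set clip : ℝ → ℝ := fun s => max 0 (min s t_m) with hclipdef
  have hclip_mem : ∀ s, clip s ∈ Set.Icc (0:ℝ) t_m := by
    intro s
    constructor
    · exact le_max_left _ _
    · exact max_le ht_m.le (min_le_right _ _)
  have hclip_eq : ∀ s ∈ Set.Icc (0:ℝ) t_m, clip s = s := by
    intro s hs
    simp only [hclipdef]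
    rw [min_eq_left hs.2, max_eq_right hs.1]
  have hclip_cont : Continuous clip := continuous_const.max (continuous_id.min continuous_const)
  -- continuity of basic objects
  have hΔxcont : ContinuousOn Δx (Set.Icc 0 t_m) := fun s hs => (hΔx s hs).continuousWithinAt
  have hΔxc : Continuous fun s => Δx (clip s) :=
    hΔxcont.comp_continuous hclip_cont hclip_mem
  have hAc : Continuous fun s => A (clip s) := hA.comp_continuous hclip_cont hclip_mem
  have hδc : Continuous fun s => δ (clip s) := hδcont.comp_continuous hclip_cont hclip_mem
  set yc : ℝ → Fin n → ℝ := fun s => P⁻¹ *ᵥ Δx (clip s) with hycdef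
  set gc : ℝ → Fin n → ℝ := fun s => P⁻¹ *ᵥ δ (clip s) with hgcdef
  set Btc : ℝ → Matrix (Fin n) (Fin n) ℝ := fun s => P⁻¹ * (A (clip s) - A₀) * P with hBtcdef
  set fc : ℝ → Fin n → ℝ := fun s => Btc s *ᵥ yc s - gc s with hfcdef
  have hyccont : Continuous yc := continuous_const.matrix_mulVec hΔxc
  have hgccont : Continuous gc := continuous_const.matrix_mulVec hδc
  have hBtccont : Continuous Btc :=
    (continuous_const.matrix_mul (hAc.sub continuous_const)).matrix_mul continuous_const
  have hfccont : Continuous fc := (hBtccont.matrix_mulVec hyccont).sub hgccont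
  set mc : ℝ → ℝ := fun s => ‖yc s‖ with hmcdef
  have hmccont : Continuous mc := hyccont.norm
  have hmc0 : ∀ s, 0 ≤ mc s := fun s => norm_nonneg _
  -- the derivative of yc within Icc 0 t_m
  have hyderiv : ∀ t' ∈ Set.Icc (0:ℝ) t_m, ∀ i,
      HasDerivWithinAt (fun s => yc s i) (lam i * yc t' i + fc t' i) (Set.Icc 0 t_m) t' := by
    intro t' ht' i
    have hcomp : ∀ j, HasDerivWithinAt (fun s => Δx s j) ((A t' *ᵥ Δx t' - δ t') j)
        (Set.Icc 0 t_m) t' := fun j => hasDerivWithinAt_pi.1 (hΔx t' ht') j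
    have hsum : HasDerivWithinAt (fun s => ∑ j, P⁻¹ i j * Δx s j)
        (∑ j, P⁻¹ i j * (A t' *ᵥ Δx t' - δ t') j) (Set.Icc 0 t_m) t' :=
      HasDerivWithinAt.fun_sum fun j _ => (hcomp j).const_mul (P⁻¹ i j)
    have halg : (∑ j, P⁻¹ i j * (A t' *ᵥ Δx t' - δ t') j) = lam i * yc t' i + fc t' i := by
      have hsum_eq : (∑ j, P⁻¹ i j * (A t' *ᵥ Δx t' - δ t') j)
          = (P⁻¹ *ᵥ (A t' *ᵥ Δx t' - δ t')) i := by
        simp [Matrix.mulVec, dotProduct]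
      rw [hsum_eq, Matrix.mulVec_sub]
      have hAt : P⁻¹ *ᵥ (A t' *ᵥ Δx t') =
          (Matrix.diagonal lam + P⁻¹ * (A t' - A₀) * P) *ᵥ (P⁻¹ *ᵥ Δx t') := by
        have e3 : P⁻¹ * (A t' - A₀) * P = P⁻¹ * A t' * P - Matrix.diagonal lam := by
          rw [← h1, mul_sub, sub_mul]
        rw [e3]
        have : Matrix.diagonal lam + (P⁻¹ * A t' * P - Matrix.diagonal lam) = P⁻¹ * A t' * P := by
          abel
        rw [this, Matrix.mulVec_mulVec, Matrix.mulVec_mulVec, Matrix.mul_assoc, hPP',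
          Matrix.mul_one]
      rw [hAt, Matrix.add_mulVec]
      simp only [hfcdef, hycdef, hgcdef, hBtcdef, hclip_eq t' ht', Pi.sub_apply, Pi.add_apply,
        Matrix.mulVec_diagonal]
      ring
    rw [← halg]
    refine hsum.congr (fun s hs => ?_) ?_
    · simp [hycdef, hclip_eq s hs, Matrix.mulVec, dotProduct]
    · simp [hycdef, hclip_eq t' ht', Matrix.mulVec, dotProduct]
  -- bound on fc
  have hfb : ∀ s ∈ Set.Icc (0:ℝ) t_m, ∀ i, |fc s i| ≤ c * mc s + δ_max := by
    intro s hs i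
    have hclips : clip s = s := hclip_eq s hs
    have hBs : ∀ j, |Btc s i j| ≤ h_max := by
      intro j
      simpa [hBtcdef, hclips] using hB s hs i j
    have hgs : |gc s i| ≤ δ_max := by
      simpa [hgcdef, hclips] using hg s hs i
    have hyb : ∀ j, |yc s j| ≤ mc s := by
      intro j
      simpa [Real.norm_eq_abs] using norm_le_pi_norm (yc s) j
    calc |fc s i| = |(∑ j, Btc s i j * yc s j) - gc s i| := by
          simp [hfcdef, Matrix.mulVec, dotProduct]
      _ ≤ |∑ j, Btc s i j * yc s j| + |gc s i| := abs_sub _ _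
      _ ≤ (∑ j, |Btc s i j * yc s j|) + δ_max := by
          gcongr
          exact Finset.abs_sum_le_sum_abs _ _
      _ ≤ (∑ _j : Fin n, h_max * mc s) + δ_max := by
          gcongr with j _
          rw [abs_mul]
          exact mul_le_mul (hBs j) (hyb j) (abs_nonneg _) hh
      _ = c * mc s + δ_max := by
          simp [Finset.sum_const, hcdef]
          ring
  -- key integral inequality
  have hkey : ∀ t' ∈ Set.Icc (0:ℝ) t_m,
      mc t' ≤ Real.exp (L * t') * ∫ s in (0:ℝ)..t', Real.exp (-L * s) * (c * mc s + δ_max) := by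
    intro t' ht'
    have ht'0 : (0:ℝ) ≤ t' := ht'.1
    have hRHSnn : 0 ≤ Real.exp (L * t') *
        ∫ s in (0:ℝ)..t', Real.exp (-L * s) * (c * mc s + δ_max) := by
      apply mul_nonneg (Real.exp_nonneg _)
      apply intervalIntegral.integral_nonneg ht'0
      intro u _
      positivity
    rw [hmcdef]
    rw [pi_norm_le_iff_of_nonneg hRHSnn]
    intro i
    have hlami : lam i ≤ L := hlam (Fin.mk_le_of_le_val (Nat.zero_le _))
    -- FTC for component i
    have hFTC : ∫ s in (0:ℝ)..t', Real.exp (-lam i * s) * fc s i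
        = Real.exp (-lam i * t') * yc t' i - Real.exp (-lam i * 0) * yc 0 i := by
      apply intervalIntegral.integral_eq_sub_of_hasDeriv_right_of_le ht'0
      · exact ((Real.continuous_exp.comp (continuous_const.mul continuous_id)).mul
          ((continuous_apply i).comp hyccont)).continuousOn
      · intro x hx
        have hxm : x ∈ Set.Icc (0:ℝ) t_m := ⟨hx.1.le, le_trans hx.2.le ht'.2⟩
        have hy : HasDerivAt (fun s => yc s i) (lam i * yc x i + fc x i) x := by
          apply (hyderiv x hxm i).hasDerivAt
          exact Icc_mem_nhds hx.1 (lt_of_lt_of_le hx.2 ht'.2)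
        have he : HasDerivAt (fun s : ℝ => Real.exp (-lam i * s))
            (-lam i * Real.exp (-lam i * x)) x := by
          simpa [mul_comm] using ((hasDerivAt_id x).const_mul (-lam i)).exp
        have := (he.mul hy).hasDerivWithinAt (s := Set.Ioi x)
        refine this.congr_deriv ?_
        ring
      · exact (((Real.continuous_exp.comp (continuous_const.mul continuous_id)).mul
          ((continuous_apply i).comp hfccont)).intervalIntegrable _ _)
    have hyc0 : yc 0 i = 0 := by
      have : clip 0 = 0 := hclip_eq 0 ⟨le_rfl, ht_m.le⟩
      simp [hycdef, this, hΔx0]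
    rw [hyc0] at hFTC
    have hval : yc t' i = Real.exp (lam i * t') *
        ∫ s in (0:ℝ)..t', Real.exp (-lam i * s) * fc s i := by
      rw [hFTC]
      rw [mul_sub, ← mul_assoc, ← Real.exp_add,
        show lam i * t' + -lam i * t' = 0 by ring, Real.exp_zero]
      ring
    rw [Real.norm_eq_abs, hval, abs_mul, abs_of_nonneg (Real.exp_nonneg _)]
    calc Real.exp (lam i * t') * |∫ s in (0:ℝ)..t', Real.exp (-lam i * s) * fc s i|
        ≤ Real.exp (lam i * t') *
          ∫ s in (0:ℝ)..t', |Real.exp (-lam i * s) * fc s i| := by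
          apply mul_le_mul_of_nonneg_left _ (Real.exp_nonneg _)
          exact intervalIntegral.abs_integral_le_integral_abs ht'0
      _ = ∫ s in (0:ℝ)..t', Real.exp (lam i * t') * |Real.exp (-lam i * s) * fc s i| := by
          rw [intervalIntegral.integral_const_mul]
      _ ≤ ∫ s in (0:ℝ)..t', Real.exp (L * t') * (Real.exp (-L * s) * (c * mc s + δ_max)) := by
          apply intervalIntegral.integral_mono_on ht'0
          · exact (continuous_const.mul ((Real.continuous_exp.comp
              (continuous_const.mul continuous_id)).mul
              ((continuous_apply i).comp hfccont)).abs).intervalIntegrable _ _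
          · exact (continuous_const.mul ((Real.continuous_exp.comp
              (continuous_const.mul continuous_id)).mul
              ((continuous_const.mul hmccont).add continuous_const))).intervalIntegrable _ _
          · intro s hs
            have hsm : s ∈ Set.Icc (0:ℝ) t_m := ⟨hs.1, le_trans hs.2 ht'.2⟩
            have hexple : Real.exp (lam i * t') * Real.exp (-lam i * s)
                ≤ Real.exp (L * t') * Real.exp (-L * s) := by
              rw [← Real.exp_add, ← Real.exp_add]
              apply Real.exp_le_exp.2
              nlinarith [mul_nonneg (sub_nonneg.2 hlami) (sub_nonneg.2 hs.2)]
            calc Real.exp (lam i * t') * |Real.exp (-lam i * s) * fc s i|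
                = (Real.exp (lam i * t') * Real.exp (-lam i * s)) * |fc s i| := by
                  rw [abs_mul, abs_of_nonneg (Real.exp_nonneg _)]; ring
              _ ≤ (Real.exp (L * t') * Real.exp (-L * s)) * (c * mc s + δ_max) := by
                  apply mul_le_mul hexple (hfb s hsm i) (abs_nonneg _) (by positivity)
              _ = Real.exp (L * t') * (Real.exp (-L * s) * (c * mc s + δ_max)) := by ring
      _ = Real.exp (L * t') * ∫ s in (0:ℝ)..t', Real.exp (-L * s) * (c * mc s + δ_max) := by
          rw [intervalIntegral.integral_const_mul]
  -- Gronwall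
  have hmcbound := gronwall_aux t_m L c δ_max hc hd hne mc hmccont hmc0 hkey
  -- final assembly
  intro t ht
  set R : ℝ := ⨆ i : Fin n, ∑ j : Fin n, |P i j| with hRdef
  have hR0 : (0:ℝ) ≤ R := by
    have h := le_ciSup (f := fun i : Fin n => ∑ j : Fin n, |P i j|)
      (Set.Finite.bddAbove (Set.finite_range _)) (⟨0, hn⟩ : Fin n)
    exact le_trans (Finset.sum_nonneg fun j _ => abs_nonneg _) h
  have hnormP : ∀ v : Fin n → ℝ, ‖P *ᵥ v‖ ≤ R * ‖v‖ := by
    intro v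
    rw [pi_norm_le_iff_of_nonneg (mul_nonneg hR0 (norm_nonneg v))]
    intro i
    calc ‖(P *ᵥ v) i‖ = |∑ j, P i j * v j| := by
          simp [Matrix.mulVec, dotProduct, Real.norm_eq_abs]
      _ ≤ ∑ j, |P i j * v j| := Finset.abs_sum_le_sum_abs _ _
      _ ≤ ∑ j, |P i j| * ‖v‖ := by
          apply Finset.sum_le_sum
          intro j _
          rw [abs_mul]
          exact mul_le_mul_of_nonneg_left
            (by simpa [Real.norm_eq_abs] using norm_le_pi_norm v j) (abs_nonneg _)
      _ = (∑ j, |P i j|) * ‖v‖ := (Finset.sum_mul _ _ _).symm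
      _ ≤ R * ‖v‖ := mul_le_mul_of_nonneg_right
          (le_ciSup (f := fun i : Fin n => ∑ j : Fin n, |P i j|)
            (Set.Finite.bddAbove (Set.finite_range _)) i) (norm_nonneg v)
  have hΔxy : Δx t = P *ᵥ yc t := by
    simp only [hycdef, hclip_eq t ht, Matrix.mulVec_mulVec, hPP', Matrix.one_mulVec]
  calc ‖Δx t‖ = ‖P *ᵥ yc t‖ := by rw [hΔxy]
    _ ≤ R * mc t := hnormP (yc t)
    _ ≤ R * (δ_max / (L + c) * (Real.exp ((L + c) * t) - 1)) :=
        mul_le_mul_of_nonneg_left (hmcbound t ht) hR0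
    _ = R * (δ_max / (L + c)) * (Real.exp ((L + c) * t) - 1) := by ring
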